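/- arXiv:2605.24348 — 5 statements merged into one kernel-verified Lean document; each statement's English description precedes it below -/
import Mathlib

section
/- Suppose G = G₁ ∨ G₂ is the one-point union of edge-labeled graphs (G₁,α₁) and (G₂,α₂) at a vertex v. Then the restriction map ρ₁: Spl_R(G,α) → Spl_R(G₁,α₁), which restricts a spline to the vertices of G₁, is a well-defined surjective R-module homomorphism. -/
/-- An edge-labeled graph: a finite (multi)graph together with an assignment
of an ideal of `R` to each edge. -/
structure ELGraph (R : Type) [CommRing R] where
  V : Type
  E : Type
  [fV : Fintype V]
  [fE : Fintype E]
  [dV : DecidableEq V]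
  ends : E → V × V
  lab : E → Ideal R

attribute [instance] ELGraph.fV ELGraph.fE ELGraph.dV

variable {R : Type} [CommRing R]

/-- `p` is a generalized spline on `(G, α)`. -/
def ELGraph.IsSpline (G : ELGraph R) (p : G.V → R) : Prop :=
  ∀ e : G.E, p (G.ends e).1 - p (G.ends e).2 ∈ G.lab e

/-- The module of generalized splines on `(G, α)`, as a submodule of `⊕_{v} R`. -/
def splSub (G : ELGraph R) : Submodule R (G.V → R) where
  carrier := {p | G.IsSpline p}
  add_mem' := by
    intro p q hp hq e
    simpa [ELGraph.IsSpline, add_sub_add_comm] using Ideal.add_mem _ (hp e) (hq e)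
  zero_mem' := by intro e; simp
  smul_mem' := by
    intro c p hp e
    simpa [ELGraph.IsSpline, mul_sub] using Submodule.smul_mem _ c (hp e)

/-- The natural inclusion of the vertices of `G₂` into the one-point union
`G₁ ∨_v G₂`, sending `v₂` to (the image of) `v₁`. -/
def wedgeInc (G₁ G₂ : ELGraph R) (v₁ : G₁.V) (v₂ : G₂.V) (w : G₂.V) :
    G₁.V ⊕ {w : G₂.V // w ≠ v₂} :=
  if h : w = v₂ then Sum.inl v₁ else Sum.inr ⟨w, h⟩

/-- The one-point union `G₁ ∨_v G₂` of edge-labeled graphs, identifying `v₁ ∈ G₁`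
with `v₂ ∈ G₂`: vertex set `V_{G₁} ⊔ (V_{G₂} ∖ {v₂})`, edge set `E_{G₁} ⊔ E_{G₂}`,
labels restricting to the original labels on each factor. -/
def wedge (G₁ G₂ : ELGraph R) (v₁ : G₁.V) (v₂ : G₂.V) : ELGraph R where
  V := G₁.V ⊕ {w : G₂.V // w ≠ v₂}
  E := G₁.E ⊕ G₂.E
  ends := fun e =>
    match e with
    | .inl e => (Sum.inl (G₁.ends e).1, Sum.inl (G₁.ends e).2)
    | .inr e => (wedgeInc G₁ G₂ v₁ v₂ (G₂.ends e).1, wedgeInc G₁ G₂ v₁ v₂ (G₂.ends e).2)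
  lab := Sum.elim G₁.lab G₂.lab

/-- for a one-point union `G = G₁ ∨_v G₂`, restriction of splines to
the vertices of `G₁` is a well-defined surjective `R`-module homomorphism
`Spl_R(G,α) → Spl_R(G₁,α₁)`. -/
theorem wedge_restriction_surjective (G₁ G₂ : ELGraph R) (v₁ : G₁.V) (v₂ : G₂.V) :
    ∃ ρ : splSub (wedge G₁ G₂ v₁ v₂) →ₗ[R] splSub G₁,
      (∀ p : splSub (wedge G₁ G₂ v₁ v₂), ∀ a : G₁.V,
        (ρ p : G₁.V → R) a = (p : (wedge G₁ G₂ v₁ v₂).V → R) (Sum.inl a)) ∧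
      Function.Surjective ρ := by
  refine ⟨{ toFun := fun p => ⟨fun a => (p : (wedge G₁ G₂ v₁ v₂).V → R) (Sum.inl a), ?_⟩,
            map_add' := fun p q => rfl, map_smul' := fun c p => rfl }, fun p a => rfl, ?_⟩
  · intro e
    exact p.2 (Sum.inl e)
  · intro q
    refine ⟨⟨fun w => Sum.elim (q : G₁.V → R) (fun _ => (q : G₁.V → R) v₁) w, ?_⟩, ?_⟩
    · intro e
      match e with
      | Sum.inl e => exact q.2 e
      | Sum.inr e =>
        have h : ∀ w : G₂.V,
            Sum.elim (q : G₁.V → R) (fun _ => (q : G₁.V → R) v₁)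
              (wedgeInc G₁ G₂ v₁ v₂ w) = (q : G₁.V → R) v₁ := by
          intro w
          unfold wedgeInc
          split <;> simp
        show _ - _ ∈ _
        simp only [wedge, h]
        simp
    · apply Subtype.ext
      funext a
      rfl
end

section
/- Suppose G = G₁ ∨ G₂ is a one-point union of edge-labeled graphs at vertex v. Then the kernel of the restriction map ρ₁: Spl_R(G,α) → Spl_R(G₁,α₁) is isomorphic to Spl_R(G₂,α₂;v), the module of splines on G₂ vanishing at v; explicitly, the kernel consists exactly of splines vanishing on all of V_{G₁}, extended by splines on G₂ vanishing at v. -/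
variable {R : Type} [CommRing R]

/-- The submodule of splines vanishing on a set `U` of vertices. -/
def splSubBased (G : ELGraph R) (U : Set G.V) : Submodule R (G.V → R) where
  carrier := {p | G.IsSpline p ∧ ∀ u ∈ U, p u = 0}
  add_mem' := by
    rintro p q ⟨hp, hp0⟩ ⟨hq, hq0⟩
    refine ⟨fun e => ?_, fun u hu => by simp [hp0 u hu, hq0 u hu]⟩
    simpa [ELGraph.IsSpline, add_sub_add_comm] using Ideal.add_mem _ (hp e) (hq e)
  zero_mem' := ⟨by intro e; simp, by intro u _; simp⟩
  smul_mem' := by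
    rintro c p ⟨hp, hp0⟩
    refine ⟨fun e => ?_, fun u hu => by simp [hp0 u hu]⟩
    simpa [ELGraph.IsSpline, mul_sub] using Submodule.smul_mem _ c (hp e)

/-- for a one-point union `G = G₁ ∨_v G₂`, the kernel of the
restriction map `ρ₁ : Spl_R(G,α) → Spl_R(G₁,α₁)` consists exactly of the splines
vanishing on all of `V_{G₁}`, and (via restriction along the inclusion of `G₂`)
it is isomorphic as an `R`-module to `Spl_R(G₂,α₂;v)`, the splines on `G₂`
vanishing at `v`. -/
theorem wedge_restriction_kernel (G₁ G₂ : ELGraph R) (v₁ : G₁.V) (v₂ : G₂.V) :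
    (∀ p : (wedge G₁ G₂ v₁ v₂).V → R, p ∈ splSub (wedge G₁ G₂ v₁ v₂) →
      ((∀ a : G₁.V, p (Sum.inl a) = 0) ↔
        p ∈ splSubBased (wedge G₁ G₂ v₁ v₂) {x | ∃ a : G₁.V, x = Sum.inl a})) ∧
    ∃ e : splSubBased (wedge G₁ G₂ v₁ v₂) {x | ∃ a : G₁.V, x = Sum.inl a}
          ≃ₗ[R] splSubBased G₂ {v₂},
      ∀ p, ∀ w : G₂.V,
        (e p : G₂.V → R) w =
          (p : (wedge G₁ G₂ v₁ v₂).V → R) (wedgeInc G₁ G₂ v₁ v₂ w) := by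

  classical
  constructor
  · intro p hp
    constructor
    · intro h0
      exact ⟨hp, fun u hu => by obtain ⟨a, rfl⟩ := hu; exact h0 a⟩
    · rintro ⟨_, h0⟩ a
      exact h0 _ ⟨a, rfl⟩
  · -- key: evaluate Sum.elim 0 q at wedgeInc
    have key : ∀ (q : G₂.V → R), q v₂ = 0 → ∀ w : G₂.V,
        Sum.elim (fun _ : G₁.V => (0:R)) (fun w : {w : G₂.V // w ≠ v₂} => q w.1)
          (wedgeInc G₁ G₂ v₁ v₂ w) = q w := by
      intro q hq w
      unfold wedgeInc
      split
      · next h => simp [h, hq]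
      · simp
    have memF : ∀ p : splSubBased (wedge G₁ G₂ v₁ v₂) {x | ∃ a : G₁.V, x = Sum.inl a},
        (fun w => (p : (wedge G₁ G₂ v₁ v₂).V → R) (wedgeInc G₁ G₂ v₁ v₂ w)) ∈
          splSubBased G₂ {v₂} := by
      intro p
      obtain ⟨hsp, h0⟩ := p.2
      constructor
      · intro e
        exact hsp (Sum.inr e)
      · intro u hu
        simp only [Set.mem_singleton_iff] at hu
        subst hu
        simp only [wedgeInc, dif_pos rfl]
        exact h0 _ ⟨v₁, rfl⟩
    have memG : ∀ q : splSubBased G₂ {v₂},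
        (Sum.elim (fun _ : G₁.V => (0:R)) (fun w : {w : G₂.V // w ≠ v₂} => (q : G₂.V → R) w.1))
          ∈ splSubBased (wedge G₁ G₂ v₁ v₂) {x | ∃ a : G₁.V, x = Sum.inl a} := by
      intro q
      obtain ⟨hsp, h0⟩ := q.2
      have hq0 : (q : G₂.V → R) v₂ = 0 := h0 v₂ rfl
      constructor
      · rintro (e | e)
        · show (0:R) - 0 ∈ G₁.lab e
          simp
        · show Sum.elim _ _ (wedgeInc G₁ G₂ v₁ v₂ (G₂.ends e).1)
              - Sum.elim _ _ (wedgeInc G₁ G₂ v₁ v₂ (G₂.ends e).2) ∈ _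
          rw [key _ hq0, key _ hq0]
          exact hsp e
      · rintro u ⟨a, rfl⟩
        rfl
    refine ⟨{
      toFun := fun p => ⟨_, memF p⟩
      map_add' := by intros; rfl
      map_smul' := by intros; rfl
      invFun := fun q => ⟨_, memG q⟩
      left_inv := ?_
      right_inv := ?_ }, fun p w => rfl⟩
    · intro p
      obtain ⟨hsp, h0⟩ := p.2
      ext x
      match x with
      | Sum.inl a => exact (h0 _ ⟨a, rfl⟩).symm
      | Sum.inr ⟨w, hw⟩ =>
        show (p : (wedge G₁ G₂ v₁ v₂).V → R) (wedgeInc G₁ G₂ v₁ v₂ w) = _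
        simp [wedgeInc, dif_neg hw]
    · intro q
      obtain ⟨hsp, h0⟩ := q.2
      ext w
      exact key _ (h0 v₂ rfl) w
end

section
/- Suppose G = G₁ ∨ G₂ is a one-point union of edge-labeled graphs at vertex v, with generalized contractions φ_i: G → G_i collapsing the other factor to v. Then Spl_R(G,α) decomposes as the internal direct sum Spl_R(G,α) = φ₁*(Spl_R(G₁,α₁)) ⊕ φ₂*(Spl_R(G₂,α₂;v)), where φ_i* denotes vertex expansion. -/
variable {R : Type} [CommRing R]

/-- Vertex expansion along the contraction `φ₁ : G₁ ∨_v G₂ → G₁` collapsing `G₂` to `v`. -/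
def wedgeExpand₁ (G₁ G₂ : ELGraph R) (v₁ : G₁.V) (v₂ : G₂.V) (q : G₁.V → R) :
    (wedge G₁ G₂ v₁ v₂).V → R :=
  Sum.elim q (fun _ => q v₁)

/-- Vertex expansion along the contraction `φ₂ : G₁ ∨_v G₂ → G₂` collapsing `G₁` to `v`. -/
def wedgeExpand₂ (G₁ G₂ : ELGraph R) (v₁ : G₁.V) (v₂ : G₂.V) (q : G₂.V → R) :
    (wedge G₁ G₂ v₁ v₂).V → R :=
  Sum.elim (fun _ => q v₂) (fun w => q w.1)

/-- for a one-point union `G = G₁ ∨_v G₂`,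
`Spl_R(G,α) = φ₁*(Spl_R(G₁,α₁)) ⊕ φ₂*(Spl_R(G₂,α₂;v))` as an internal direct sum:
every spline on `G` is uniquely the sum of the vertex expansion of a spline on `G₁`
and the vertex expansion of a spline on `G₂` vanishing at `v`. -/
theorem wedge_internal_direct_sum (G₁ G₂ : ELGraph R) (v₁ : G₁.V) (v₂ : G₂.V)
    (p : (wedge G₁ G₂ v₁ v₂).V → R) (hp : (wedge G₁ G₂ v₁ v₂).IsSpline p) :
    ∃! qq : (G₁.V → R) × (G₂.V → R),
      G₁.IsSpline qq.1 ∧ G₂.IsSpline qq.2 ∧ qq.2 v₂ = 0 ∧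
      p = wedgeExpand₁ G₁ G₂ v₁ v₂ qq.1 + wedgeExpand₂ G₁ G₂ v₁ v₂ qq.2 := by
  classical
  refine ⟨⟨fun w => p (Sum.inl w),
          fun w => p (wedgeInc G₁ G₂ v₁ v₂ w) - p (Sum.inl v₁)⟩, ⟨?_, ?_, ?_, ?_⟩, ?_⟩
  · intro e
    exact hp (Sum.inl e)
  · intro e
    have := hp (Sum.inr e)
    simpa [wedge, ELGraph.IsSpline, sub_sub_sub_cancel_right] using this
  · simp [wedgeInc]
  · funext w
    rcases w with w | ⟨w, h⟩
    · erw [Pi.add_apply]; simp [wedgeExpand₁, wedgeExpand₂, wedgeInc]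
    · erw [Pi.add_apply]; simp [wedgeExpand₁, wedgeExpand₂, wedgeInc, h]
  · rintro ⟨r₁, r₂⟩ ⟨hr₁, hr₂, hrv, hsum⟩
    have hrv' : r₂ v₂ = 0 := hrv
    have h1 : ∀ w, p (Sum.inl w) = r₁ w := by
      intro w
      have := congrFun hsum (Sum.inl w)
      erw [Pi.add_apply] at this; simpa [wedgeExpand₁, wedgeExpand₂, hrv'] using this
    have h2 : ∀ w, r₂ w = p (wedgeInc G₁ G₂ v₁ v₂ w) - p (Sum.inl v₁) := by
      intro w
      by_cases h : w = v₂
      · simp [h, hrv', wedgeInc]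
      · have := congrFun hsum (Sum.inr ⟨w, h⟩)
        erw [Pi.add_apply] at this; simp only [wedgeExpand₁, wedgeExpand₂, Sum.elim_inr, Pi.add_apply] at this
        rw [wedgeInc]
        simp [h, this, ← h1 v₁]
    ext w
    · exact (h1 w).symm
    · exact h2 w
end

section
/- Let G be a connected graph containing a path P = v₀v₁⋯v_k such that v₁,…,v_{k−1} all have degree two in G, and let G' be obtained from G by replacing the path with a single edge v₀v_k. Define the edge-labeling α' on G' to agree with α away from the new edge, and set α'(v₀v_k) = α(v₀v₁) + α(v₁v₂) + ⋯ + α(v_{k−1}v_k) (the ideal sum). Then the restriction map ρ: Spl_R(G,α) → Spl_R(G',α'), restricting splines to V_G ∖ {v₁,…,v_{k−1}}, is a well-defined surjective R-module homomorphism. -/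
variable {R : Type} [CommRing R]

/-- The degree of a vertex (loops count twice). -/
noncomputable def ELGraph.degree (G : ELGraph R) (w : G.V) : ℕ :=
  (Finset.univ.filter fun e : G.E => (G.ends e).1 = w).card +
  (Finset.univ.filter fun e : G.E => (G.ends e).2 = w).card

section PathContraction

variable (G : ELGraph R) (k : ℕ) (v : Fin (k + 1) → G.V) (e : Fin k → G.E)

/-- The interior vertices `v₁, …, v_{k−1}` of the path. -/
def pathInterior : Set G.V :=
  {w | ∃ j : Fin (k + 1), (j : ℕ) ≠ 0 ∧ (j : ℕ) ≠ k ∧ w = v j}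

/-- The spline condition for the contracted graph `G'`, in which the path
`v₀v₁⋯v_k` has been replaced by a single edge `v₀v_k` labeled by the ideal sum
`α(v₀v₁) + ⋯ + α(v_{k−1}v_k)`, all other edges and labels being unchanged. -/
def SplineCond' (q : G.V → R) : Prop :=
  (∀ f : G.E, (∀ i : Fin k, f ≠ e i) →
    q (G.ends f).1 - q (G.ends f).2 ∈ G.lab f) ∧
  q (v 0) - q (v (Fin.last k)) ∈ ∑ i : Fin k, G.lab (e i)

lemma mem_sum_ideals {ι : Type} (s : Finset ι) (I : ι → Ideal R) (x : R)
    (hx : x ∈ ∑ i ∈ s, I i) : ∃ y : ι → R, (∀ i, y i ∈ I i) ∧ ∑ i ∈ s, y i = x := by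
  classical
  induction s using Finset.induction_on generalizing x with
  | empty => exact ⟨0, fun i => (I i).zero_mem, by simpa using hx.symm⟩
  | @insert a s ha ih =>
    rw [Finset.sum_insert ha, Submodule.add_eq_sup, Submodule.mem_sup] at hx
    obtain ⟨z, hz, w, hw, rfl⟩ := hx
    obtain ⟨y, hy, hys⟩ := ih w hw
    refine ⟨fun i => if i = a then z else y i, fun i => ?_, ?_⟩
    · by_cases h : i = a
      · subst h; simp only [if_pos rfl]; exact hz
      · simpa only [if_neg h] using hy i
    · rw [Finset.sum_insert ha, if_pos rfl]
      congr 1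
      rw [← hys]
      exact Finset.sum_congr rfl fun i hi => if_neg (by rintro rfl; exact ha hi)

lemma ideal_le_sum {ι : Type} (s : Finset ι) (I : ι → Ideal R) {i : ι} (hi : i ∈ s) :
    I i ≤ ∑ j ∈ s, I j :=
  Finset.single_le_sum (f := I) (fun _ _ => bot_le) hi

/-- if `P = v₀v₁⋯v_k` is a path in `G` whose interior vertices all have
degree two, and `G'` is obtained from `G` by replacing the path with a single edge
`v₀v_k` labeled by the ideal sum of the path labels, then the restriction map
`ρ : Spl_R(G,α) → Spl_R(G',α')` (restricting to `V_G ∖ {v₁,…,v_{k−1}}`) is a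
well-defined surjective `R`-module homomorphism. -/
theorem path_contraction_restriction_surjective
    (hk : 0 < k)
    (hv : Function.Injective v) (he : Function.Injective e)
    (hpath : ∀ i : Fin k,
      G.ends (e i) = (v i.castSucc, v i.succ) ∨ G.ends (e i) = (v i.succ, v i.castSucc))
    (hdeg : ∀ j : Fin (k + 1), (j : ℕ) ≠ 0 → (j : ℕ) ≠ k → G.degree (v j) = 2) :
    (∀ p : G.V → R, G.IsSpline p → SplineCond' G k v e p) ∧
    (∀ q : G.V → R, SplineCond' G k v e q →
      ∃ p : G.V → R, G.IsSpline p ∧ ∀ w : G.V, w ∉ pathInterior G k v → p w = q w) := by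
  classical
  -- No edge other than the path edges touches an interior vertex.
  have hnoinc : ∀ f : G.E, (∀ i : Fin k, f ≠ e i) → ∀ j : Fin (k + 1),
      (j : ℕ) ≠ 0 → (j : ℕ) ≠ k →
      ¬((G.ends f).1 = v j ∨ (G.ends f).2 = v j) := by
    intro f hf j hj0 hjk hcon
    have hjk' : (j : ℕ) < k := lt_of_le_of_ne (Nat.lt_succ_iff.mp j.isLt) hjk
    set i1 : Fin k := ⟨(j : ℕ) - 1, by omega⟩ with hi1
    set i2 : Fin k := ⟨(j : ℕ), hjk'⟩ with hi2
    have hs1 : i1.succ = j := by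
      apply Fin.ext; simp [hi1, Fin.val_succ]; omega
    have hs2 : i2.castSucc = j := by
      apply Fin.ext; simp [hi2]
    have h12 : i1 ≠ i2 := by
      intro h
      have := congrArg Fin.val h
      simp [hi1, hi2] at this
      omega
    set c : G.E → ℕ := fun g =>
      (if (G.ends g).1 = v j then 1 else 0) + (if (G.ends g).2 = v j then 1 else 0)
      with hc
    have hdsum : G.degree (v j) = ∑ g : G.E, c g := by
      rw [ELGraph.degree, Finset.card_filter, Finset.card_filter,
        ← Finset.sum_add_distrib]
    have hone : ∀ g : G.E, ((G.ends g).1 = v j ∨ (G.ends g).2 = v j) → 1 ≤ c g := by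
      intro g hg
      rcases hg with h | h <;> simp [hc, h] <;> omega
    have hc1 : 1 ≤ c (e i1) := by
      apply hone
      rcases hpath i1 with h | h
      · right; rw [h, hs1]
      · left; rw [h, hs1]
    have hc2 : 1 ≤ c (e i2) := by
      apply hone
      rcases hpath i2 with h | h
      · left; rw [h, hs2]
      · right; rw [h, hs2]
    have hcf : 1 ≤ c f := hone f hcon
    set T : Finset G.E := {f, e i1, e i2} with hT
    have hcard : T.card = 3 := by
      rw [hT]
      rw [Finset.card_insert_of_notMem, Finset.card_insert_of_notMem]
      · simp
      · simp [he.ne h12]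
      · simp only [Finset.mem_insert, Finset.mem_singleton]
        push_neg
        exact ⟨hf i1, hf i2⟩
    have h3 : 3 ≤ ∑ g ∈ T, c g := by
      calc 3 = ∑ _g ∈ T, 1 := by rw [Finset.sum_const, hcard]; ring
      _ ≤ ∑ g ∈ T, c g := by
        apply Finset.sum_le_sum
        intro g hg
        simp only [hT, Finset.mem_insert, Finset.mem_singleton] at hg
        rcases hg with rfl | rfl | rfl <;> assumption
    have hle : ∑ g ∈ T, c g ≤ ∑ g : G.E, c g :=
      Finset.sum_le_sum_of_subset (Finset.subset_univ T)
    have := hdeg j hj0 hjk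
    omega
  constructor
  · -- Part 1: restriction is well-defined
    intro p hp
    refine ⟨fun f _ => hp f, ?_⟩
    set F : ℕ → R := fun n => p (v ⟨min n k, Nat.lt_succ_of_le (min_le_right n k)⟩)
      with hF
    have key : p (v 0) - p (v (Fin.last k)) =
        ∑ i : Fin k, (p (v i.castSucc) - p (v i.succ)) := by
      have h1 : F 0 = p (v 0) := by
        simp only [hF]; congr 1
      have h2 : F k = p (v (Fin.last k)) := by
        simp only [hF]; congr 1; exact congrArg v (Fin.ext (by simp [Fin.last]))
      rw [← h1, ← h2, ← Finset.sum_range_sub' F k,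
        ← Fin.sum_univ_eq_sum_range (fun n => F n - F (n + 1)) k]
      apply Finset.sum_congr rfl
      intro i _
      have hi : (i : ℕ) < k := i.isLt
      simp only [hF]
      congr 1
      · congr 1
        exact congrArg v (Fin.ext (by simp only [Fin.coe_castSucc]; omega))
      · congr 1
        exact congrArg v (Fin.ext (by simp only [Fin.val_succ]; omega))
    rw [key]
    apply Submodule.sum_mem
    intro i _
    apply ideal_le_sum Finset.univ (fun i => G.lab (e i)) (Finset.mem_univ i)
    rcases hpath i with h | h
    · have := hp (e i); rw [h] at this; exact this
    · have := hp (e i); rw [h] at this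
      simpa using (G.lab (e i)).neg_mem this
  · -- Part 2: surjectivity
    intro q hq
    obtain ⟨hq1, hq2⟩ := hq
    obtain ⟨y, hy, hys⟩ :=
      mem_sum_ideals Finset.univ (fun i => G.lab (e i)) _ hq2
    set S : ℕ → R :=
      fun n => ∑ i ∈ Finset.univ.filter (fun i : Fin k => (i : ℕ) < n), y i with hS
    have hS0 : S 0 = 0 := by simp [hS]
    have hSk : S k = q (v 0) - q (v (Fin.last k)) := by
      rw [hS, ← hys]
      apply Finset.sum_congr _ (fun _ _ => rfl)
      apply Finset.filter_true_of_mem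
      intro i _
      exact i.isLt
    have hSstep : ∀ i : Fin k, S ((i : ℕ) + 1) = S (i : ℕ) + y i := by
      intro i
      have hfe : Finset.univ.filter (fun j : Fin k => (j : ℕ) < (i : ℕ) + 1) =
          insert i (Finset.univ.filter (fun j : Fin k => (j : ℕ) < (i : ℕ))) := by
        ext j
        simp [Fin.ext_iff]
        omega
      rw [hS]
      simp only [hfe]
      rw [Finset.sum_insert (by simp)]
      ring
    set p : G.V → R := fun w =>
      if h : ∃ j : Fin (k + 1), v j = w
      then q (v 0) - S ((Classical.choose h : Fin (k + 1)) : ℕ)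
      else q w
      with hp
    have hpv : ∀ j : Fin (k + 1), p (v j) = q (v 0) - S (j : ℕ) := by
      intro j
      have hex : ∃ j' : Fin (k + 1), v j' = v j := ⟨j, rfl⟩
      have : Classical.choose hex = j := hv (Classical.choose_spec hex)
      simp only [hp, dif_pos hex, this]
    have hpq : ∀ w : G.V, w ∉ pathInterior G k v → p w = q w := by
      intro w hw
      by_cases h : ∃ j : Fin (k + 1), v j = w
      · obtain ⟨j, rfl⟩ := h
        have hj : (j : ℕ) = 0 ∨ (j : ℕ) = k := by
          by_contra hcon
          push_neg at hcon
          exact hw ⟨j, hcon.1, hcon.2, rfl⟩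
        rcases hj with hj | hj
        · rw [hpv j]
          have : j = 0 := Fin.ext (by simpa using hj)
          rw [this]
          simp [hS0]
        · rw [hpv j, hj, hSk]
          have : j = Fin.last k := Fin.ext (by simpa using hj)
          rw [this]
          ring
      · simp only [hp, dif_neg h]
    refine ⟨p, ?_, hpq⟩
    intro f
    by_cases hf : ∃ i : Fin k, f = e i
    · obtain ⟨i, rfl⟩ := hf
      have hcs : p (v i.castSucc) - p (v i.succ) = y i := by
        rw [hpv, hpv, Fin.coe_castSucc, Fin.val_succ, hSstep i]
        ring
      rcases hpath i with h | h
      · rw [h]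
        simpa [hcs] using hy i
      · rw [h]
        have : p (v i.succ) - p (v i.castSucc) = -(y i) := by rw [← hcs]; ring
        simp only [this]
        exact (G.lab (e i)).neg_mem (hy i)
    · push_neg at hf
      have hend : ∀ w : G.V, ((G.ends f).1 = w ∨ (G.ends f).2 = w) →
          w ∉ pathInterior G k v := by
        rintro w hw ⟨j, hj0, hjk, rfl⟩
        exact hnoinc f hf j hj0 hjk hw
      rw [hpq _ (hend _ (Or.inl rfl)), hpq _ (hend _ (Or.inr rfl))]
      exact hq1 f hf


end PathContraction
end

section
/- Let k be a field and R = Z/pZ for a prime p (viewed as a field). Let (T,α) be an edge-labeled tree where each edge is labeled either by the zero ideal or by the full ring R. Then the dimension of Spl_R(T,α) as an R-vector space equals |E_T| − n₀ + 1, where n₀ is the number of edges labeled by the zero ideal. -/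
variable {R : Type} [CommRing R]

/-- `G` is connected: any two vertices are joined by a walk. -/
def ELGraph.Connected (G : ELGraph R) : Prop :=
  ∀ a b : G.V, Relation.ReflTransGen
    (fun x y => ∃ e : G.E, G.ends e = (x, y) ∨ G.ends e = (y, x)) a b

open scoped Classical in
/-- for the field `R = ℤ/pℤ` and an edge-labeled tree `(T,α)` whose
edges are labeled by the zero ideal or the full ring, the dimension of
`Spl_R(T,α)` as an `R`-vector space is `|E_T| − n₀ + 1`, where `n₀` is the number
of edges labeled by the zero ideal. -/
theorem tree_spline_dimension (p : ℕ) [Fact p.Prime]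
    (G : ELGraph (ZMod p))
    (htree : G.Connected ∧ Fintype.card G.V = Fintype.card G.E + 1)
    (hlab : ∀ e : G.E, G.lab e = ⊥ ∨ G.lab e = ⊤) :
    Module.finrank (ZMod p) (splSub G) =
      Fintype.card G.E - Fintype.card {e : G.E // G.lab e = ⊥} + 1 := by
  classical
  obtain ⟨hconn, hcard⟩ := htree
  have hV : Nonempty G.V := Fintype.card_pos_iff.mp (by omega)
  obtain ⟨v₀⟩ := hV
  let R := ZMod p
  let φ : (G.V → R) →ₗ[R] (G.E → R) :=
    { toFun := fun q e => q (G.ends e).1 - q (G.ends e).2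
      map_add' := by intro a b; funext e; simp; ring
      map_smul' := by intro c a; funext e; simp [mul_sub] }
  let ψ : (G.V → R) →ₗ[R] ({e : G.E // G.lab e = ⊥} → R) :=
    (LinearMap.funLeft R R Subtype.val).comp φ
  -- kernel of ψ is splSub
  have hker : LinearMap.ker ψ = splSub G := by
    ext q
    constructor
    · intro hq e
      rcases hlab e with h0 | h1
      · rw [h0, Ideal.mem_bot]
        have := congrFun (LinearMap.mem_ker.mp hq) ⟨e, h0⟩
        simpa [ψ, φ, LinearMap.funLeft] using this
      · rw [h1]; trivial
    · intro hq
      rw [LinearMap.mem_ker]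
      funext e
      have := hq e.1
      rw [e.2, Ideal.mem_bot] at this
      simpa [ψ, φ, LinearMap.funLeft] using this
  -- kernel of φ is the constants
  let c : R →ₗ[R] (G.V → R) := LinearMap.pi fun _ => LinearMap.id
  have hc_inj : Function.Injective c := by
    intro r s hrs
    simpa [c] using congrFun hrs v₀
  have hkerφ : LinearMap.ker φ = LinearMap.range c := by
    ext q
    constructor
    · intro hq
      have hq' : ∀ e : G.E, q (G.ends e).1 - q (G.ends e).2 = 0 := by
        intro e; exact congrFun (LinearMap.mem_ker.mp hq) e
      have key : ∀ a b : G.V, Relation.ReflTransGen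
          (fun x y => ∃ e : G.E, G.ends e = (x, y) ∨ G.ends e = (y, x)) a b →
          q a = q b := by
        intro a b hab
        induction hab with
        | refl => rfl
        | tail h₁ h₂ ih =>
          obtain ⟨e, he | he⟩ := h₂
          · have := hq' e; rw [he] at this
            rw [ih]; exact (sub_eq_zero.mp this)
          · have := hq' e; rw [he] at this
            rw [ih]; exact (sub_eq_zero.mp this).symm
      exact ⟨q v₀, funext fun v => (key v₀ v (hconn v₀ v))⟩
    · rintro ⟨r, rfl⟩
      rw [LinearMap.mem_ker]
      funext e
      simp [φ, c]
  have hkdim : Module.finrank R (LinearMap.ker φ) = 1 := by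
    rw [hkerφ, LinearMap.finrank_range_of_inj hc_inj, Module.finrank_self]
  -- φ is surjective
  have hrn := LinearMap.finrank_range_add_finrank_ker φ
  rw [hkdim, Module.finrank_pi] at hrn
  have hφsurj : Function.Surjective φ := by
    rw [← LinearMap.range_eq_top]
    apply Submodule.eq_top_of_finrank_eq
    rw [Module.finrank_pi]
    omega
  have hψsurj : Function.Surjective ψ :=
    (LinearMap.funLeft_surjective_of_injective R R _ Subtype.val_injective).comp hφsurj
  -- rank-nullity for ψ
  have hrn2 := LinearMap.finrank_range_add_finrank_ker ψ
  rw [LinearMap.range_eq_top.mpr hψsurj, hker, Module.finrank_pi, finrank_top,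
    Module.finrank_pi] at hrn2
  have hle : Fintype.card {e : G.E // G.lab e = ⊥} ≤ Fintype.card G.E :=
    Fintype.card_subtype_le _
  have hfinal : Fintype.card {e : G.E // G.lab e = ⊥} +
      Module.finrank (ZMod p) (splSub G) = Fintype.card G.V := hrn2
  omega
end
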